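/- arXiv:1411.3285 — 2 statements merged into one kernel-verified Lean document; each statement's English description precedes it below -/
import Mathlib

section
/- For all z > 0 and β > 0, setting ν(w) = √(1 + w²) (so that ν⁻¹(w)² = w² − 1 for w ≥ 1) and a = 1/(βz), the general edge-stopping formula simplifies to the Perona–Malik diffusivity: (3/(β² z² ν(a)³)) · ∫₀¹ ξ² √( ν(a)²/ξ² − 1 − a² ) dξ = 1/(1 + β² z²). -/
open MeasureTheory Real

lemma my_int_sqrt : ∫ u in (0:ℝ)..1, Real.sqrt u = 2/3 := by
  simp only [Real.sqrt_eq_rpow]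
  rw [integral_rpow (Or.inl (by norm_num))]
  norm_num

lemma my_key : ∫ ξ in (0:ℝ)..1, ξ * Real.sqrt (1 - ξ ^ 2) = 1/3 := by
  have h := intervalIntegral.integral_comp_smul_deriv
      (f := fun ξ : ℝ => 1 - ξ ^ 2) (f' := fun ξ : ℝ => -2 * ξ) (g := Real.sqrt)
      (a := 0) (b := 1)
      (fun x _ => by
        have := (hasDerivAt_pow 2 x).const_sub 1
        exact this.congr_deriv (by norm_num))
      ((continuous_const.mul continuous_id).continuousOn) Real.continuous_sqrt
  simp only [Function.comp, smul_eq_mul] at h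
  norm_num at h
  have h2 : ∫ ξ in (0:ℝ)..1, 2 * ξ * Real.sqrt (1 - ξ ^ 2)
      = 2 * ∫ ξ in (0:ℝ)..1, ξ * Real.sqrt (1 - ξ ^ 2) := by
    rw [← intervalIntegral.integral_const_mul]
    congr 1; ext ξ; ring
  rw [h2, intervalIntegral.integral_symm 0 1, my_int_sqrt] at h
  linarith

/-- For the Euclidean amoeba metric ν(w) = √(1+w²), the general edge-stopping
integral formula evaluates to the Perona–Malik diffusivity 1/(1+β²z²). -/
theorem euclidean_edge_stopping_is_perona_malik
    (z β : ℝ) (hz : 0 < z) (hβ : 0 < β) :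
    let ν : ℝ → ℝ := fun w => Real.sqrt (1 + w ^ 2)
    let a : ℝ := 1 / (β * z)
    3 / (β ^ 2 * z ^ 2 * (ν a) ^ 3) *
        (∫ ξ in (0:ℝ)..1, ξ ^ 2 * Real.sqrt ((ν a) ^ 2 / ξ ^ 2 - 1 - a ^ 2))
      = 1 / (1 + β ^ 2 * z ^ 2) := by
  intro ν a
  have haval : a = 1 / (β * z) := rfl
  have ha : 0 < a := by rw [haval]; positivity
  have hν2 : ν a ^ 2 = 1 + a ^ 2 := Real.sq_sqrt (by positivity)
  have hcongr : Set.EqOn (fun ξ : ℝ => ξ ^ 2 * Real.sqrt ((ν a) ^ 2 / ξ ^ 2 - 1 - a ^ 2))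
      (fun ξ : ℝ => Real.sqrt (1 + a ^ 2) * (ξ * Real.sqrt (1 - ξ ^ 2)))
      (Set.uIcc 0 1) := by
    intro ξ hξ
    rw [Set.uIcc_of_le (by norm_num)] at hξ
    obtain ⟨h0, h1⟩ := hξ
    rcases eq_or_lt_of_le h0 with h | h
    · simp [← h]
    · have hξ2 : (0:ℝ) < ξ ^ 2 := by positivity
      have harg : (ν a) ^ 2 / ξ ^ 2 - 1 - a ^ 2 = (1 + a ^ 2) * ((1 - ξ ^ 2) / ξ ^ 2) := by
        rw [hν2]; field_simp; ring
      simp only [harg]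
      rw [Real.sqrt_mul (by positivity), Real.sqrt_div (by nlinarith),
        Real.sqrt_sq h0]
      field_simp
  rw [intervalIntegral.integral_congr hcongr, intervalIntegral.integral_const_mul, my_key]
  have hνval : ν a = Real.sqrt (1 + a ^ 2) := rfl
  have hνpos : 0 < ν a := Real.sqrt_pos.2 (by positivity)
  have hν3 : (ν a) ^ 3 = (1 + a ^ 2) * ν a := by
    have : (ν a) ^ 3 = (ν a) ^ 2 * ν a := by ring
    rw [this, hν2]
  rw [← hνval, hν3]
  have ha2 : a ^ 2 = 1 / (β ^ 2 * z ^ 2) := by rw [haval]; field_simp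
  rw [ha2]
  have hbz : β ^ 2 * z ^ 2 ≠ 0 := by positivity
  field_simp
  ring
end

section
/- Fix k > 0 and let g(z) = 1/(1 + z²). For ε > 0 define u_ε : ℝ² → ℝ by u_ε(x,y) = x + ε cos(kx), and for ε < 1/k let R_ε(x,y) = [ |∇u_ε| div( g(|∇u_ε|) ∇u_ε/|∇u_ε| ) ](x,y) be the self-snakes right-hand side (which here equals ∂_x u_ε(x) · ∂_x[ g(∂_x u_ε) ](x) since u_ε depends only on x and ∂_x u_ε > 0). Then, as ε → 0⁺, sup over (x,y) ∈ ℝ² of | R_ε(x,y) − (k² ε/2) cos(kx) | = O(ε²). (A gradient-aligned oscillation of frequency k on a unit slope is amplified by the self-snakes evolution with frequency response factor k²/2.) -/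
open MeasureTheory Filter Topology

noncomputable section

abbrev Plane := EuclideanSpace ℝ (Fin 2)

/-- divergence of a planar vector field -/
def div2 (V : Plane → Plane) (x : Plane) : ℝ :=
  ∑ i : Fin 2, fderiv ℝ (fun y => V y i) x (EuclideanSpace.single i 1)

/-- the Perona–Malik edge-stopping function (β = 1) -/
def g (z : ℝ) : ℝ := 1 / (1 + z ^ 2)

/-- the perturbed slope u_ε(x,y) = x + ε cos(kx) -/
def uPert (k ε : ℝ) (p : Plane) : ℝ := p 0 + ε * Real.cos (k * p 0)

/-- the self-snakes right-hand side |∇u| div( g(|∇u|) ∇u/|∇u| ) -/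
def selfSnakesRHS (u : Plane → ℝ) (p : Plane) : ℝ :=
  ‖gradient u p‖ *
    div2 (fun y => (g ‖gradient u y‖ / ‖gradient u y‖) • gradient u y) p

namespace SSA
variable (k ε : ℝ)
def a (t : ℝ) : ℝ := 1 - ε * k * Real.sin (k * t)

lemma hasDerivAt_a (t : ℝ) :
    HasDerivAt (a k ε) (-(ε * k ^ 2 * Real.cos (k * t))) t := by
  have h1 : HasDerivAt (fun s : ℝ => k * s) k t := by
    simpa using (hasDerivAt_id t).const_mul k
  have h2 : HasDerivAt (fun s => Real.sin (k * s)) (Real.cos (k * t) * k) t :=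
    (Real.hasDerivAt_sin (k * t)).comp t h1
  have h3 := (hasDerivAt_const t (1 : ℝ)).sub ((h2.const_mul (ε * k)))
  refine h3.congr_deriv ?_
  ring

lemma hasDerivAt_phi (t : ℝ) :
    HasDerivAt (fun s => s + ε * Real.cos (k * s)) (a k ε t) t := by
  have h1 : HasDerivAt (fun s : ℝ => k * s) k t := by
    simpa using (hasDerivAt_id t).const_mul k
  have h2 : HasDerivAt (fun s => Real.cos (k * s)) (-Real.sin (k * t) * k) t :=
    (Real.hasDerivAt_cos (k * t)).comp t h1
  have h3 := (hasDerivAt_id t).add (h2.const_mul ε)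
  refine h3.congr_deriv ?_
  simp [a]; ring

lemma gradient_uPert (p : Plane) :
    gradient (uPert k ε) p
      = a k ε (p 0) • EuclideanSpace.single (0 : Fin 2) (1 : ℝ) := by
  have hproj := (EuclideanSpace.proj (0 : Fin 2) : Plane →L[ℝ] ℝ).hasFDerivAt (x := p)
  have hF : HasFDerivAt (uPert k ε)
      (a k ε (p 0) • (EuclideanSpace.proj (0 : Fin 2) : Plane →L[ℝ] ℝ)) p := by
    have := (hasDerivAt_phi k ε (p 0)).comp_hasFDerivAt p hproj
    exact this
  have hG : HasGradientAt (uPert k ε)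
      (a k ε (p 0) • EuclideanSpace.single (0 : Fin 2) (1 : ℝ)) p := by
    rw [hasGradientAt_iff_hasFDerivAt]
    refine hF.congr_fderiv ?_
    ext y
    simp [real_inner_smul_left, EuclideanSpace.inner_single_left]
  exact hG.gradient
end SSA

namespace SSA2
open SSA
variable (k ε : ℝ)

lemma norm_gradient (p : Plane) (h : 0 < a k ε (p 0)) :
    ‖gradient (uPert k ε) p‖ = a k ε (p 0) := by
  rw [gradient_uPert, norm_smul, EuclideanSpace.norm_single]
  simp [abs_of_pos h]

lemma VF_eq (h : ∀ t, 0 < a k ε t) :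
    (fun y : Plane => (g ‖gradient (uPert k ε) y‖ / ‖gradient (uPert k ε) y‖) •
        gradient (uPert k ε) y)
      = fun y : Plane => g (a k ε (y 0)) • EuclideanSpace.single (0 : Fin 2) (1 : ℝ) := by
  funext y
  rw [norm_gradient k ε y (h _), gradient_uPert, smul_smul,
    div_mul_cancel₀ _ (h (y 0)).ne']

lemma hasDerivAt_G (t : ℝ) :
    HasDerivAt (fun s => g (a k ε s))
      (2 * a k ε t * (ε * k ^ 2 * Real.cos (k * t)) / (1 + (a k ε t) ^ 2) ^ 2) t := by
  have hq : HasDerivAt (fun s => 1 + (a k ε s) ^ 2)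
      (2 * a k ε t * (-(ε * k ^ 2 * Real.cos (k * t)))) t := by
    have := ((hasDerivAt_a k ε t).pow 2).const_add 1
    refine this.congr_deriv ?_; ring
  have hne : (1 + (a k ε t) ^ 2) ≠ 0 := by positivity
  have hinv := hq.inv hne
  have heq : (fun s => g (a k ε s)) = fun s => (1 + (a k ε s) ^ 2)⁻¹ := by
    funext s; simp [g, one_div]
  rw [heq]
  refine hinv.congr_deriv ?_
  field_simp

lemma div2_eq (h : ∀ t, 0 < a k ε t) (p : Plane) :
    div2 (fun y : Plane => (g ‖gradient (uPert k ε) y‖ / ‖gradient (uPert k ε) y‖) •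
        gradient (uPert k ε) y) p
      = 2 * a k ε (p 0) * (ε * k ^ 2 * Real.cos (k * p 0))
          / (1 + (a k ε (p 0)) ^ 2) ^ 2 := by
  rw [VF_eq k ε h]
  unfold div2
  rw [Fin.sum_univ_two]
  have h0 : (fun y : Plane =>
      (g (a k ε (y 0)) • EuclideanSpace.single (0 : Fin 2) (1:ℝ)) 0)
      = fun y : Plane => g (a k ε (y 0)) := by
    funext y; simp [EuclideanSpace.single_apply]
  have h1 : (fun y : Plane =>
      (g (a k ε (y 0)) • EuclideanSpace.single (0 : Fin 2) (1:ℝ)) 1)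
      = fun _ : Plane => (0:ℝ) := by
    funext y; simp [EuclideanSpace.single_apply]
  rw [h0, h1]
  have hproj := (EuclideanSpace.proj (0 : Fin 2) : Plane →L[ℝ] ℝ).hasFDerivAt (x := p)
  have hF : HasFDerivAt (fun y : Plane => g (a k ε (y 0)))
      ((2 * a k ε (p 0) * (ε * k ^ 2 * Real.cos (k * p 0))
          / (1 + (a k ε (p 0)) ^ 2) ^ 2) • (EuclideanSpace.proj (0 : Fin 2) : Plane →L[ℝ] ℝ)) p := by
    have := (hasDerivAt_G k ε (p 0)).comp_hasFDerivAt p hproj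
    exact this
  rw [hF.fderiv, fderiv_fun_const]
  simp [EuclideanSpace.single_apply]

lemma rhs_eq (h : ∀ t, 0 < a k ε t) (p : Plane) :
    selfSnakesRHS (uPert k ε) p
      = a k ε (p 0) * (2 * a k ε (p 0) * (ε * k ^ 2 * Real.cos (k * p 0))
          / (1 + (a k ε (p 0)) ^ 2) ^ 2) := by
  unfold selfSnakesRHS
  rw [norm_gradient k ε p (h _), div2_eq k ε h p]

end SSA2

set_option maxHeartbeats 1000000
open SSA SSA2

/-- A gradient-aligned oscillation of frequency k on a unit slope is amplified by
the self-snakes evolution with frequency response factor k²/2: the deviation of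
the self-snakes right-hand side from (k²ε/2)cos(kx) is uniformly O(ε²) as ε → 0⁺. -/
theorem self_snakes_gradient_aligned_frequency_response (k : ℝ) (hk : 0 < k) :
    ∃ C : ℝ, ∀ᶠ ε in 𝓝[>] (0:ℝ), ∀ p : Plane,
      |selfSnakesRHS (uPert k ε) p - k ^ 2 * ε / 2 * Real.cos (k * p 0)|
        ≤ C * ε ^ 2 := by
  refine ⟨2 * k ^ 3, ?_⟩
  have hmem : Set.Ioo (0:ℝ) (1/(2*k)) ∈ 𝓝[>] (0:ℝ) :=
    Ioo_mem_nhdsGT_of_mem ⟨le_refl _, by positivity⟩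
  filter_upwards [hmem] with ε hε p
  obtain ⟨hε0, hεk⟩ := hε
  have hek : ε * k < 1/2 := by
    have := (lt_div_iff₀ (by positivity : (0:ℝ) < 2*k)).mp hεk
    linarith
  have hek0 : 0 < ε * k := by positivity
  have hpos : ∀ t, 0 < a k ε t := by
    intro t
    have h1 := Real.sin_le_one (k * t)
    have h2 := Real.neg_one_le_sin (k * t)
    unfold a
    nlinarith
  rw [rhs_eq k ε hpos p]
  set s := Real.sin (k * p 0) with hs
  set c := Real.cos (k * p 0) with hc
  set A := a k ε (p 0) with hA
  have hAval : A = 1 - ε * k * s := rfl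
  have hApos := hpos (p 0)
  have hq0 : (0:ℝ) < 1 + A ^ 2 := by positivity
  have key : A * (2 * A * (ε * k ^ 2 * c) / (1 + A ^ 2) ^ 2) - k ^ 2 * ε / 2 * c
      = -(ε * k ^ 2 * c * (A ^ 2 - 1) ^ 2) / (2 * (1 + A ^ 2) ^ 2) := by
    field_simp
    ring
  rw [key, abs_div, abs_neg, abs_of_pos (by positivity : (0:ℝ) < 2 * (1 + A ^ 2) ^ 2),
    div_le_iff₀ (by positivity)]
  have hsb : |s| ≤ 1 := Real.abs_sin_le_one _
  have hcb : |c| ≤ 1 := Real.abs_cos_le_one _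
  have habs : |ε * k ^ 2 * c * (A ^ 2 - 1) ^ 2| ≤ ε * k ^ 2 * (A ^ 2 - 1) ^ 2 := by
    rw [abs_mul, abs_mul]
    have h1 : |ε * k ^ 2| = ε * k ^ 2 := abs_of_pos (by positivity)
    have h2 : |(A ^ 2 - 1) ^ 2| = (A ^ 2 - 1) ^ 2 := abs_of_nonneg (sq_nonneg _)
    rw [h1, h2]
    calc ε * k ^ 2 * |c| * (A ^ 2 - 1) ^ 2 = ε * k ^ 2 * (A ^ 2 - 1) ^ 2 * |c| := by ring
      _ ≤ ε * k ^ 2 * (A ^ 2 - 1) ^ 2 * 1 :=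
          mul_le_mul_of_nonneg_left hcb (by positivity)
      _ = ε * k ^ 2 * (A ^ 2 - 1) ^ 2 := by ring
  have ha1 : |A - 1| ≤ ε * k := by
    rw [hAval]
    calc |1 - ε * k * s - 1| = ε * k * |s| := by
          rw [show (1 - ε * k * s - 1) = -(ε * k * s) by ring, abs_neg, abs_mul,
            abs_of_pos hek0]
      _ ≤ ε * k * 1 := by nlinarith
      _ = ε * k := by ring
  have ha2 : |A + 1| ≤ 5/2 := by
    rw [hAval]
    have : |1 - ε * k * s + 1| ≤ 2 + ε * k * |s| := by
      calc |1 - ε * k * s + 1| ≤ |(2:ℝ)| + |ε * k * s| := by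
            have := abs_add_le (2:ℝ) (-(ε * k * s))
            simpa [show (1:ℝ) - ε * k * s + 1 = 2 + -(ε * k * s) by ring] using this
        _ = 2 + ε * k * |s| := by rw [abs_mul, abs_of_pos hek0]; norm_num
    nlinarith
  have hA2 : |A ^ 2 - 1| ≤ ε * k * (5/2) := by
    have : |A ^ 2 - 1| = |A - 1| * |A + 1| := by
      rw [← abs_mul]; ring_nf
    rw [this]
    exact mul_le_mul ha1 ha2 (abs_nonneg _) (by positivity)
  have hA2sq : (A ^ 2 - 1) ^ 2 ≤ (ε * k * (5/2)) ^ 2 := by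
    have := sq_abs (A ^ 2 - 1)
    nlinarith [abs_nonneg (A ^ 2 - 1)]
  have hQ1 : (1:ℝ) ≤ (1 + A ^ 2) ^ 2 := by nlinarith [sq_nonneg A, sq_nonneg (A ^ 2)]
  have hp : (0:ℝ) ≤ ε ^ 2 * k ^ 3 := by positivity
  calc |ε * k ^ 2 * c * (A ^ 2 - 1) ^ 2| ≤ ε * k ^ 2 * (A ^ 2 - 1) ^ 2 := habs
    _ ≤ ε * k ^ 2 * (ε * k * (5/2)) ^ 2 :=
        mul_le_mul_of_nonneg_left hA2sq (by positivity)
    _ = (25/4) * (ε * k) * (ε ^ 2 * k ^ 3) := by ring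
    _ ≤ (25/8) * (ε ^ 2 * k ^ 3) := by nlinarith
    _ ≤ 4 * (ε ^ 2 * k ^ 3) := by linarith
    _ = (2 * k ^ 3 * ε ^ 2 * 2) * 1 := by ring
    _ ≤ (2 * k ^ 3 * ε ^ 2 * 2) * (1 + A ^ 2) ^ 2 :=
        mul_le_mul_of_nonneg_left hQ1 (by positivity)
    _ = 2 * k ^ 3 * ε ^ 2 * (2 * (1 + A ^ 2) ^ 2) := by ring
end
end
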